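/- Fix 0 ≤ t < T, a continuous map r : ℝ^d → ℝ^d, a continuous map q from ℝ^d to symmetric positive definite d×d matrices, and h : ℝ^d → ℝ. Let Ū : [0,T] × ℝ^d → ℝ be continuously differentiable with Ū_t(s,x) + ⟨∇_x Ū(s,x), r(x)⟩ − (1/2)⟨∇_x Ū(s,x), q(x) ∇_x Ū(s,x)⟩ ≥ 0 on (0,T) × ℝ^d and Ū(T,·) ≤ h. Then for every continuously differentiable φ : [t,T] → ℝ^d with φ(t) = x, Ū(t,x) ≤ (1/2)∫_t^T ⟨φ'(s) − r(φ(s)), q(φ(s))⁻¹ (φ'(s) − r(φ(s)))⟩ ds + h(φ(T)). In particular Ū(t,x) ≤ G(t,x), where G(t,x) is the infimum of the right-hand side over all such paths φ. -/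

import Mathlib

open MeasureTheory intervalIntegral Matrix
open scoped RealInnerProductSpace
open scoped Topology

section Aux

lemma hjb_dot_ineq {d : ℕ} (Q : Matrix (Fin d) (Fin d) ℝ) (hQ : Q.PosDef)
    (p v : Fin d → ℝ) :
    -(v ⬝ᵥ Q⁻¹ *ᵥ v) ≤ p ⬝ᵥ Q *ᵥ p + 2 * (p ⬝ᵥ v) := by
  have hdet : IsUnit Q.det := hQ.det_pos.ne'.isUnit
  have hsymm : Qᵀ = Q := hQ.isHermitian
  have key : 0 ≤ (p + Q⁻¹ *ᵥ v) ⬝ᵥ Q *ᵥ (p + Q⁻¹ *ᵥ v) := by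
    have := hQ.posSemidef.dotProduct_mulVec_nonneg (p + Q⁻¹ *ᵥ v)
    simpa using this
  have hQQinv : Q *ᵥ (Q⁻¹ *ᵥ v) = v := by
    rw [Matrix.mulVec_mulVec, Matrix.mul_nonsing_inv _ hdet, Matrix.one_mulVec]
  have h3 : (Q⁻¹ *ᵥ v) ⬝ᵥ Q *ᵥ p = p ⬝ᵥ v := by
    rw [Matrix.dotProduct_mulVec, ← Matrix.mulVec_transpose, hsymm, hQQinv,
      dotProduct_comm]
  have h4 : (Q⁻¹ *ᵥ v) ⬝ᵥ v = v ⬝ᵥ Q⁻¹ *ᵥ v := dotProduct_comm _ _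
  have expand : (p + Q⁻¹ *ᵥ v) ⬝ᵥ Q *ᵥ (p + Q⁻¹ *ᵥ v)
      = p ⬝ᵥ Q *ᵥ p + 2 * (p ⬝ᵥ v) + v ⬝ᵥ Q⁻¹ *ᵥ v := by
    rw [Matrix.mulVec_add, hQQinv, add_dotProduct, dotProduct_add,
      dotProduct_add, h3, h4]
    ring
  linarith [key, expand ▸ key]

lemma hjb_inner_toEuclideanLin {d : ℕ} (M : Matrix (Fin d) (Fin d) ℝ)
    (a b : EuclideanSpace ℝ (Fin d)) :
    ⟪a, Matrix.toEuclideanLin M b⟫ =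
      (WithLp.equiv 2 _ a) ⬝ᵥ M *ᵥ (WithLp.equiv 2 _ b) := by
  rw [EuclideanSpace.inner_eq_star_dotProduct]
  simp [Matrix.toEuclideanLin_apply]
  exact dotProduct_comm _ _

lemma hjb_inner_dot {d : ℕ} (a b : EuclideanSpace ℝ (Fin d)) :
    ⟪a, b⟫ = (WithLp.equiv 2 _ a) ⬝ᵥ (WithLp.equiv 2 _ b) := by
  rw [EuclideanSpace.inner_eq_star_dotProduct]; simp; exact dotProduct_comm _ _

variable {E : Type*} [NormedAddCommGroup E] [InnerProductSpace ℝ E] [CompleteSpace E]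

lemma hjb_joint_fderiv
    (U : ℝ → E → ℝ) (Ut : ℝ → E → ℝ) (Ux : ℝ → E → E)
    (hUt : ∀ s x, HasDerivAt (fun τ => U τ x) (Ut s x) s)
    (hUx : ∀ s x, HasGradientAt (fun y => U s y) (Ux s x) x)
    (hUtc : Continuous fun p : ℝ × E => Ut p.1 p.2)
    (s₀ : ℝ) (x₀ : E) :
    HasFDerivAt (fun p : ℝ × E => U p.1 p.2)
      (Ut s₀ x₀ • ContinuousLinearMap.fst ℝ ℝ E +
        (InnerProductSpace.toDual ℝ E (Ux s₀ x₀)).comp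
          (ContinuousLinearMap.snd ℝ ℝ E)) (s₀, x₀) := by
  rw [hasFDerivAt_iff_isLittleO_nhds_zero, Asymptotics.isLittleO_iff]
  intro c hc
  have hc2 : 0 < c / 2 := by linarith
  have hB : ∀ᶠ w : E in 𝓝 0,
      ‖U s₀ (x₀ + w) - U s₀ x₀ - ⟪Ux s₀ x₀, w⟫‖ ≤ c / 2 * ‖w‖ := by
    have h1 := (hUx s₀ x₀).hasFDerivAt
    rw [hasFDerivAt_iff_isLittleO_nhds_zero] at h1
    have h2 := h1.def hc2
    simpa [InnerProductSpace.toDual_apply_apply] using h2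
  have hBp : ∀ᶠ p : ℝ × E in 𝓝 0,
      ‖U s₀ (x₀ + p.2) - U s₀ x₀ - ⟪Ux s₀ x₀, p.2⟫‖ ≤ c / 2 * ‖p.2‖ := by
    have h0 : Filter.Tendsto (fun p : ℝ × E => p.2) (𝓝 0) (𝓝 0) := by
      simpa using (continuous_snd.tendsto (0 : ℝ × E))
    exact h0.eventually hB
  have hcont : ∃ δ > 0, ∀ p' : ℝ × E, dist p' (s₀, x₀) < δ →
      ‖Ut p'.1 p'.2 - Ut s₀ x₀‖ ≤ c / 2 := by
    have hC : ContinuousAt (fun p : ℝ × E => Ut p.1 p.2) (s₀, x₀) := hUtc.continuousAt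
    rw [Metric.continuousAt_iff] at hC
    obtain ⟨δ, hδ0, hδ⟩ := hC (c / 2) hc2
    exact ⟨δ, hδ0, fun p' hp' => by
      have := hδ hp'
      rw [Real.dist_eq] at this
      exact le_of_lt this⟩
  obtain ⟨δ, hδ0, hδ⟩ := hcont
  have hball : ∀ᶠ p : ℝ × E in 𝓝 0, ‖p‖ < δ := by
    have : Metric.ball (0 : ℝ × E) δ ∈ 𝓝 (0 : ℝ × E) := Metric.ball_mem_nhds _ hδ0
    filter_upwards [this] with p hp
    simpa [dist_zero_right] using hp
  filter_upwards [hBp, hball] with p hBb hpδ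
  obtain ⟨a, w⟩ := p
  have hanorm : |a| ≤ ‖(a, w)‖ := norm_fst_le (a, w)
  have hwnorm : ‖w‖ ≤ ‖(a, w)‖ := norm_snd_le (a, w)
  have hA : ‖U (s₀ + a) (x₀ + w) - U s₀ (x₀ + w) - Ut s₀ x₀ * a‖
      ≤ c / 2 * ‖(a, w)‖ := by
    set g : ℝ → ℝ := fun τ => U τ (x₀ + w) - Ut s₀ x₀ * τ with hg
    have hgd : ∀ τ ∈ Set.uIcc s₀ (s₀ + a),
        HasDerivWithinAt g (Ut τ (x₀ + w) - Ut s₀ x₀) (Set.uIcc s₀ (s₀ + a)) τ := by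
      intro τ _
      have h1 : HasDerivAt (fun y : ℝ => Ut s₀ x₀ * y) (Ut s₀ x₀) τ := by
        simpa using (hasDerivAt_id τ).const_mul (Ut s₀ x₀)
      exact ((hUt τ (x₀ + w)).sub h1).hasDerivWithinAt
    have hbound : ∀ τ ∈ Set.uIcc s₀ (s₀ + a),
        ‖Ut τ (x₀ + w) - Ut s₀ x₀‖ ≤ c / 2 := by
      intro τ hτ
      apply hδ (τ, x₀ + w)
      rw [Prod.dist_eq]
      have hτa : |τ - s₀| ≤ |a| := by
        rcases Set.mem_uIcc.1 hτ with ⟨h1, h2⟩ | ⟨h1, h2⟩ <;>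
          · rw [abs_le]
            constructor <;> nlinarith [le_abs_self a, neg_abs_le a]
      have h1 : dist τ s₀ < δ := by
        rw [Real.dist_eq]
        calc |τ - s₀| ≤ |a| := hτa
          _ ≤ ‖(a, w)‖ := hanorm
          _ < δ := hpδ
      have h2 : dist (x₀ + w) x₀ < δ := by
        simpa using lt_of_le_of_lt hwnorm hpδ
      exact max_lt h1 h2
    have := (convex_uIcc s₀ (s₀ + a)).norm_image_sub_le_of_norm_hasDerivWithin_le
      hgd hbound (Set.left_mem_uIcc) (Set.right_mem_uIcc)
    have h2 : g (s₀ + a) - g s₀ = U (s₀ + a) (x₀ + w) - U s₀ (x₀ + w) - Ut s₀ x₀ * a := by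
      simp only [hg]; ring
    rw [h2] at this
    calc ‖U (s₀ + a) (x₀ + w) - U s₀ (x₀ + w) - Ut s₀ x₀ * a‖
        ≤ c / 2 * ‖s₀ + a - s₀‖ := this
      _ = c / 2 * |a| := by rw [add_sub_cancel_left]; rfl
      _ ≤ c / 2 * ‖(a, w)‖ := by
          apply mul_le_mul_of_nonneg_left hanorm (le_of_lt hc2)
  have hL : (Ut s₀ x₀ • ContinuousLinearMap.fst ℝ ℝ E +
        (InnerProductSpace.toDual ℝ E (Ux s₀ x₀)).comp
          (ContinuousLinearMap.snd ℝ ℝ E)) (a, w)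
      = Ut s₀ x₀ * a + ⟪Ux s₀ x₀, w⟫ := by
    simp [InnerProductSpace.toDual_apply_apply, smul_eq_mul]
  have key : U ((s₀, x₀) + (a, w)).1 ((s₀, x₀) + (a, w)).2 - U s₀ x₀ -
      (Ut s₀ x₀ * a + ⟪Ux s₀ x₀, w⟫)
      = (U (s₀ + a) (x₀ + w) - U s₀ (x₀ + w) - Ut s₀ x₀ * a)
        + (U s₀ (x₀ + w) - U s₀ x₀ - ⟪Ux s₀ x₀, w⟫) := by
    simp only [Prod.fst_add, Prod.snd_add]; ring
  rw [hL]
  calc ‖U ((s₀, x₀) + (a, w)).1 ((s₀, x₀) + (a, w)).2 - U s₀ x₀ -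
      (Ut s₀ x₀ * a + ⟪Ux s₀ x₀, w⟫)‖
      ≤ ‖U (s₀ + a) (x₀ + w) - U s₀ (x₀ + w) - Ut s₀ x₀ * a‖
        + ‖U s₀ (x₀ + w) - U s₀ x₀ - ⟪Ux s₀ x₀, w⟫‖ := by
        rw [key]; exact norm_add_le _ _
    _ ≤ c / 2 * ‖(a, w)‖ + c / 2 * ‖(a, w)‖ := by
        refine add_le_add hA (le_trans hBb ?_)
        exact mul_le_mul_of_nonneg_left hwnorm (le_of_lt hc2)
    _ = c * ‖(a, w)‖ := by ring

lemma hjb_path_deriv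
    (U : ℝ → E → ℝ) (Ut : ℝ → E → ℝ) (Ux : ℝ → E → E)
    (hUt : ∀ s x, HasDerivAt (fun τ => U τ x) (Ut s x) s)
    (hUx : ∀ s x, HasGradientAt (fun y => U s y) (Ux s x) x)
    (hUtc : Continuous fun p : ℝ × E => Ut p.1 p.2)
    (φ : ℝ → E) (v : E) (s : ℝ) (hφ : HasDerivAt φ v s) :
    HasDerivAt (fun τ => U τ (φ τ)) (Ut s (φ s) + ⟪Ux s (φ s), v⟫) s := by
  have hγ : HasDerivAt (fun τ => ((τ, φ τ) : ℝ × E)) (1, v) s :=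
    (hasDerivAt_id s).prodMk hφ
  have hJ := hjb_joint_fderiv U Ut Ux hUt hUx hUtc s (φ s)
  have := hJ.comp_hasDerivAt s hγ
  simpa [InnerProductSpace.toDual_apply_apply, smul_eq_mul, Function.comp_def] using this

end Aux

set_option maxHeartbeats 2000000 in
/-- A classical subsolution `Ū` of the HJB equation is bounded above by the
action functional plus terminal cost along every C¹ path starting at `x`;
in particular `Ū(t,x) ≤ G(t,x)`, the value of the variational problem. -/
theorem subsolution_le_value
    (d : ℕ) (t T : ℝ) (ht : 0 ≤ t) (htT : t < T)
    (r : EuclideanSpace ℝ (Fin d) → EuclideanSpace ℝ (Fin d)) (hr : Continuous r)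
    (q : EuclideanSpace ℝ (Fin d) → Matrix (Fin d) (Fin d) ℝ)
    (hq : Continuous q) (hqpos : ∀ x, (q x).PosDef)
    (h : EuclideanSpace ℝ (Fin d) → ℝ)
    (Ubar : ℝ → EuclideanSpace ℝ (Fin d) → ℝ)
    (Ut : ℝ → EuclideanSpace ℝ (Fin d) → ℝ)
    (Ux : ℝ → EuclideanSpace ℝ (Fin d) → EuclideanSpace ℝ (Fin d))
    (hUt : ∀ s x, HasDerivAt (fun τ => Ubar τ x) (Ut s x) s)
    (hUx : ∀ s x, HasGradientAt (fun y => Ubar s y) (Ux s x) x)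
    (hUtc : Continuous fun p : ℝ × EuclideanSpace ℝ (Fin d) => Ut p.1 p.2)
    (hUxc : Continuous fun p : ℝ × EuclideanSpace ℝ (Fin d) => Ux p.1 p.2)
    (hsub : ∀ s ∈ Set.Ioo (0 : ℝ) T, ∀ x,
      Ut s x + ⟪Ux s x, r x⟫
        - (1 / 2) * ⟪Ux s x, Matrix.toEuclideanLin (q x) (Ux s x)⟫ ≥ 0)
    (hterm : ∀ x, Ubar T x ≤ h x)
    (x : EuclideanSpace ℝ (Fin d)) :
    (∀ φ φ' : ℝ → EuclideanSpace ℝ (Fin d),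
      (∀ s ∈ Set.Icc t T, HasDerivAt φ (φ' s) s) →
      ContinuousOn φ' (Set.Icc t T) → φ t = x →
      Ubar t x ≤ (1 / 2) * (∫ s in t..T,
          ⟪φ' s - r (φ s),
            Matrix.toEuclideanLin ((q (φ s))⁻¹) (φ' s - r (φ s))⟫) + h (φ T)) ∧
    (∀ g : ℝ, IsGLB {v : ℝ | ∃ φ φ' : ℝ → EuclideanSpace ℝ (Fin d),
        (∀ s ∈ Set.Icc t T, HasDerivAt φ (φ' s) s) ∧
        ContinuousOn φ' (Set.Icc t T) ∧ φ t = x ∧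
        v = (1 / 2) * (∫ s in t..T,
            ⟪φ' s - r (φ s),
              Matrix.toEuclideanLin ((q (φ s))⁻¹) (φ' s - r (φ s))⟫) + h (φ T)} g →
      Ubar t x ≤ g) := by
  have htT' : t ≤ T := le_of_lt htT
  have main : ∀ φ φ' : ℝ → EuclideanSpace ℝ (Fin d),
      (∀ s ∈ Set.Icc t T, HasDerivAt φ (φ' s) s) →
      ContinuousOn φ' (Set.Icc t T) → φ t = x →
      Ubar t x ≤ (1 / 2) * (∫ s in t..T,
          ⟪φ' s - r (φ s),
            Matrix.toEuclideanLin ((q (φ s))⁻¹) (φ' s - r (φ s))⟫) + h (φ T) := by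
    intro φ φ' hφ hφ'c hφt
    set F : ℝ → ℝ := fun s => Ubar s (φ s) with hF
    set F' : ℝ → ℝ := fun s => Ut s (φ s) + ⟪Ux s (φ s), φ' s⟫ with hF'
    set L : ℝ → ℝ := fun s =>
      ⟪φ' s - r (φ s), Matrix.toEuclideanLin ((q (φ s))⁻¹) (φ' s - r (φ s))⟫ with hL
    have hφcont : ContinuousOn φ (Set.Icc t T) := fun s hs =>
      (hφ s hs).continuousAt.continuousWithinAt
    have hidφ : ContinuousOn (fun s => ((s, φ s) : ℝ × EuclideanSpace ℝ (Fin d))) (Set.Icc t T) :=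
      (continuousOn_id).prodMk hφcont
    -- derivative of F
    have hFd : ∀ s ∈ Set.uIcc t T, HasDerivAt F (F' s) s := by
      intro s hs
      rw [Set.uIcc_of_le htT'] at hs
      exact hjb_path_deriv Ubar Ut Ux hUt hUx hUtc φ (φ' s) s (hφ s hs)
    -- continuity of F'
    have hF'c : ContinuousOn F' (Set.Icc t T) := by
      apply ContinuousOn.add
      · exact hUtc.comp_continuousOn hidφ
      · exact (hUxc.comp_continuousOn hidφ).inner hφ'c
    -- continuity of L
    have hqinv : Continuous fun y : EuclideanSpace ℝ (Fin d) => (q y)⁻¹ := by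
      have heq : (fun y : EuclideanSpace ℝ (Fin d) => (q y)⁻¹) = fun y => ((q y).det)⁻¹ • (q y).adjugate := by
        funext y
        rw [Matrix.inv_def, Ring.inverse_eq_inv']
      rw [heq]
      exact (hq.matrix_det.inv₀ fun y => (hqpos y).det_pos.ne').smul hq.matrix_adjugate
    have hbil : Continuous fun p : Matrix (Fin d) (Fin d) ℝ × EuclideanSpace ℝ (Fin d) =>
        ⟪p.2, Matrix.toEuclideanLin p.1 p.2⟫ := by
      have heq : ∀ p : Matrix (Fin d) (Fin d) ℝ × EuclideanSpace ℝ (Fin d),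
          ⟪p.2, Matrix.toEuclideanLin p.1 p.2⟫
            = (WithLp.equiv 2 _ p.2) ⬝ᵥ p.1 *ᵥ (WithLp.equiv 2 _ p.2) := by
        intro p
        exact hjb_inner_toEuclideanLin p.1 p.2 p.2
      simp only [heq]
      have hsnd : Continuous fun p : Matrix (Fin d) (Fin d) ℝ × EuclideanSpace ℝ (Fin d) =>
          (WithLp.equiv 2 (Fin d → ℝ)) p.2 := (PiLp.continuous_ofLp (p := 2) (β := fun _ : Fin d => ℝ)).comp continuous_snd
      exact hsnd.dotProduct (continuous_fst.matrix_mulVec hsnd)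
    have hvcont : ContinuousOn (fun s => φ' s - r (φ s)) (Set.Icc t T) :=
      hφ'c.sub (hr.comp_continuousOn hφcont)
    have hLc : ContinuousOn L (Set.Icc t T) := by
      have hMc : ContinuousOn (fun s => (q (φ s))⁻¹) (Set.Icc t T) :=
        (hqinv.comp_continuousOn hφcont)
      have hcomp := hbil.comp_continuousOn (hMc.prodMk hvcont)
      rw [hL]
      exact hcomp
    -- interval integrability
    have hIntF' : IntervalIntegrable F' volume t T := by
      apply ContinuousOn.intervalIntegrable
      rwa [Set.uIcc_of_le htT']
    have hIntL : IntervalIntegrable L volume t T := by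
      apply ContinuousOn.intervalIntegrable
      rwa [Set.uIcc_of_le htT']
    have hIntnL : IntervalIntegrable (fun s => -(1 / 2) * L s) volume t T :=
      hIntL.const_mul _
    -- FTC
    have hFTC : ∫ s in t..T, F' s = F T - F t :=
      intervalIntegral.integral_eq_sub_of_hasDerivAt hFd hIntF'
    -- pointwise inequality on Ioo t T
    have hpt : ∀ s ∈ Set.Ioo t T, -(1 / 2) * L s ≤ F' s := by
      intro s hs
      have hs0 : s ∈ Set.Ioo (0 : ℝ) T := ⟨lt_of_le_of_lt ht hs.1, hs.2⟩
      have hsubs := hsub s hs0 (φ s)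
      set Q := q (φ s) with hQ
      set p := Ux s (φ s) with hp
      set v := φ' s - r (φ s) with hv
      have hdot := hjb_dot_ineq Q (hqpos (φ s)) (WithLp.equiv 2 _ p) (WithLp.equiv 2 _ v)
      have e1 : ⟪p, Matrix.toEuclideanLin Q p⟫
          = (WithLp.equiv 2 _ p) ⬝ᵥ Q *ᵥ (WithLp.equiv 2 _ p) :=
        hjb_inner_toEuclideanLin Q p p
      have e2 : L s = (WithLp.equiv 2 _ v) ⬝ᵥ Q⁻¹ *ᵥ (WithLp.equiv 2 _ v) :=
        hjb_inner_toEuclideanLin Q⁻¹ v v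
      have e3 : ⟪p, v⟫ = (WithLp.equiv 2 _ p) ⬝ᵥ (WithLp.equiv 2 _ v) :=
        hjb_inner_dot p v
      have e4 : ⟪p, φ' s⟫ = ⟪p, r (φ s)⟫ + ⟪p, v⟫ := by
        rw [hv, inner_sub_right]; ring
      have hF's : F' s = Ut s (φ s) + ⟪p, φ' s⟫ := rfl
      rw [hF's, e4]
      rw [e2] at *
      rw [e1] at hsubs
      rw [e3] at *
      linarith
    -- a.e. inequality on Icc
    have hae : (fun s => -(1 / 2) * L s) ≤ᵐ[volume.restrict (Set.Icc t T)] F' := by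
      have hTt : (volume : Measure ℝ) ({t, T} : Set ℝ) = 0 :=
        (Set.toFinite ({t, T} : Set ℝ)).measure_zero volume
      have h0 : ∀ᵐ s ∂volume, s ∉ ({t, T} : Set ℝ) :=
        measure_eq_zero_iff_ae_notMem.mp hTt
      filter_upwards [ae_restrict_mem measurableSet_Icc, ae_restrict_of_ae h0]
        with s hs hs'
      have : s ∈ Set.Ioo t T := by
        rcases hs with ⟨h1, h2⟩
        constructor
        · exact lt_of_le_of_ne h1 (Ne.symm (fun hne => hs' (by simp [hne])))
        · exact lt_of_le_of_ne h2 (fun hne => hs' (by simp [hne]))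
      exact hpt s this
    have hmono : (∫ s in t..T, -(1 / 2) * L s) ≤ ∫ s in t..T, F' s :=
      intervalIntegral.integral_mono_ae_restrict htT' hIntnL hIntF' hae
    have hintneg : (∫ s in t..T, -(1 / 2) * L s) = -(1 / 2) * ∫ s in t..T, L s := by
      rw [intervalIntegral.integral_const_mul]
    have hFt : F t = Ubar t x := by
      show Ubar t (φ t) = Ubar t x
      rw [hφt]
    have hFT : F T ≤ h (φ T) := hterm (φ T)
    have : -(1 / 2) * ∫ s in t..T, L s ≤ F T - F t := by
      rw [← hintneg, ← hFTC] at *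
      exact hmono
    linarith
  refine ⟨main, ?_⟩
  intro g hg
  apply hg.2
  rintro v ⟨φ, φ', h1, h2, h3, rfl⟩
  exact main φ φ' h1 h2 h3
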